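/- Let k be a commutative ring and G a finite group with |G| a unit of k. Then for any subgroup H ⊆ G one has β_k(G) ≤ [G:H]·β_k(H); in particular β_k(G) ≤ |G|. -/

import Mathlib

/-- `beta`: see above. -/
noncomputable def beta {A : Type*} [CommRing A] (𝒜 : ℕ → Set A) (B : Subring A) : ℕ∞ :=
  sInf ((↑) '' {n : ℕ | B ≤ Subring.closure {a : A | a ∈ B ∧ ∃ d ≤ n, a ∈ 𝒜 d}})

/-- An `ℕ`-graded commutative `k`-algebra equipped with an action of `G` by
degree-preserving `k`-algebra automorphisms. -/
structure GradedAlgebraWithAction (k : Type) [CommRing k] (G : Type) [Group G] :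
    Type 1 where
  carrier : Type
  [commRing : CommRing carrier]
  [algebra : Algebra k carrier]
  grading : ℕ → Submodule k carrier
  graded : GradedAlgebra grading
  action : G →* (carrier ≃ₐ[k] carrier)
  degPres : ∀ (g : G) (d : ℕ), ∀ a ∈ grading d, action g a ∈ grading d

attribute [instance] GradedAlgebraWithAction.commRing GradedAlgebraWithAction.algebra

namespace GradedAlgebraWithAction

variable {k G : Type} [CommRing k] [Group G] (X : GradedAlgebraWithAction k G)

/-- The invariant subring `A^G`. -/
def inv : Subring X.carrier where
  carrier := {a : X.carrier | ∀ g : G, X.action g a = a}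
  mul_mem' := by intro a b ha hb g; rw [map_mul, ha g, hb g]
  one_mem' := fun g => map_one (X.action g)
  add_mem' := by intro a b ha hb g; rw [map_add, ha g, hb g]
  zero_mem' := fun g => map_zero (X.action g)
  neg_mem' := by intro a ha g; rw [map_neg, ha g]

/-- The invariant subring fixed by a subgroup `H ≤ G`. -/
def invSub (H : Subgroup G) : Subring X.carrier where
  carrier := {a : X.carrier | ∀ g ∈ H, X.action g a = a}
  mul_mem' := by intro a b ha hb g hg; rw [map_mul, ha g hg, hb g hg]
  one_mem' := fun g _ => map_one (X.action g)
  add_mem' := by intro a b ha hb g hg; rw [map_add, ha g hg, hb g hg]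
  zero_mem' := fun g _ => map_zero (X.action g)
  neg_mem' := by intro a ha g hg; rw [map_neg, ha g hg]

/-- `β(A)` of the underlying graded algebra. -/
noncomputable def betaTop : ℕ∞ := beta (fun d => (X.grading d : Set X.carrier)) ⊤

/-- `β(A^G)` for the induced grading on the invariant ring. -/
noncomputable def betaInv : ℕ∞ := beta (fun d => (X.grading d : Set X.carrier)) X.inv

end GradedAlgebraWithAction

/-- `β_k(G)`: the supremum of `β(A^G)` over all `ℕ`-graded commutative `k`-algebras `A`
with an action of `G` by degree-preserving `k`-algebra automorphisms and `β(A) ≤ 1`. -/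
noncomputable def betaRing (k : Type) [CommRing k] (G : Type) [Group G] : ℕ∞ :=
  ⨆ (X : GradedAlgebraWithAction k G) (_ : X.betaTop ≤ 1), X.betaInv

attribute [instance] GradedAlgebraWithAction.graded

namespace GradedAlgebraWithAction

variable {k G : Type} [CommRing k] [Group G] (X : GradedAlgebraWithAction k G)

/-- Degree-`d` component. -/
noncomputable def proj (d : ℕ) (a : X.carrier) : X.carrier :=
  (DirectSum.decompose X.grading a d : X.carrier)

theorem proj_add (d : ℕ) (a b : X.carrier) :
    X.proj d (a + b) = X.proj d a + X.proj d b := by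
  simp [proj, DirectSum.decompose_add]

theorem proj_zero (d : ℕ) : X.proj d 0 = 0 := by simp [proj]

theorem proj_neg (d : ℕ) (a : X.carrier) : X.proj d (-a) = - X.proj d a := by
  have h := X.proj_add d a (-a)
  rw [add_neg_cancel, X.proj_zero] at h
  exact eq_neg_of_add_eq_zero_right h.symm

theorem proj_mem (d : ℕ) (a : X.carrier) : X.proj d a ∈ X.grading d :=
  SetLike.coe_mem _

theorem proj_of_mem_same {d : ℕ} {a : X.carrier} (h : a ∈ X.grading d) :
    X.proj d a = a := DirectSum.decompose_of_mem_same _ h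

theorem proj_of_mem_ne {d e : ℕ} {a : X.carrier} (h : a ∈ X.grading e) (hne : e ≠ d) :
    X.proj d a = 0 := DirectSum.decompose_of_mem_ne _ h hne

theorem exists_sum_proj (a : X.carrier) :
    ∃ s : Finset ℕ, a = ∑ d ∈ s, X.proj d a := by
  classical
  exact ⟨(DirectSum.decompose X.grading a).support,
    (DirectSum.sum_support_decompose _ a).symm⟩

theorem proj_action (g : G) (d : ℕ) (a : X.carrier) :
    X.proj d (X.action g a) = X.action g (X.proj d a) := by
  induction a using DirectSum.Decomposition.inductionOn X.grading with
  | zero => simp [proj]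
  | homogeneous x =>
      rename_i e
      obtain ⟨x, hx⟩ := x
      rcases eq_or_ne e d with rfl | hne
      · rw [X.proj_of_mem_same hx, X.proj_of_mem_same (X.degPres g _ _ hx)]
      · rw [X.proj_of_mem_ne hx hne, X.proj_of_mem_ne (X.degPres g _ _ hx) hne, map_zero]
  | add a b ha hb => rw [map_add, X.proj_add, X.proj_add, ha, hb, map_add]

theorem proj_mul_right {e : ℕ} {p : X.carrier} (hp : p ∈ X.grading e) (D : ℕ) (hD : e ≤ D)
    (x : X.carrier) : X.proj D (x * p) = X.proj (D - e) x * p := by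
  induction x using DirectSum.Decomposition.inductionOn X.grading with
  | zero => simp [proj]
  | homogeneous y =>
      rename_i n
      obtain ⟨y, hy⟩ := y
      rcases eq_or_ne n (D - e) with rfl | hne
      · rw [X.proj_of_mem_same hy,
          X.proj_of_mem_same (show y * p ∈ X.grading D by
            have := SetLike.mul_mem_graded hy hp
            rwa [Nat.sub_add_cancel hD] at this)]
      · rw [X.proj_of_mem_ne hy hne, zero_mul,
          X.proj_of_mem_ne (SetLike.mul_mem_graded hy hp) (by omega)]
  | add a b ha hb => rw [add_mul, X.proj_add, ha, hb, X.proj_add, add_mul]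

end GradedAlgebraWithAction

namespace GradedAlgebraWithAction

variable {k G : Type} [CommRing k] [Group G] (X : GradedAlgebraWithAction k G)

theorem mem_inv_iff {a : X.carrier} : a ∈ X.inv ↔ ∀ g : G, X.action g a = a := Iff.rfl

theorem mem_invSub_iff {H : Subgroup G} {a : X.carrier} :
    a ∈ X.invSub H ↔ ∀ g ∈ H, X.action g a = a := Iff.rfl

theorem inv_le_invSub (H : Subgroup G) : X.inv ≤ X.invSub H :=
  fun _ ha g _ => ha g

theorem inv_smul_mem {e : k} {a : X.carrier} (ha : a ∈ X.inv) : e • a ∈ X.inv := by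
  intro g
  rw [map_smul, ha g]

/-- The transfer operator `Tr(a) = ∑_{g ∈ G} g • a`. -/
noncomputable def tr [Fintype G] (a : X.carrier) : X.carrier := ∑ g : G, X.action g a

variable [Fintype G]

theorem tr_add (a b : X.carrier) : X.tr (a + b) = X.tr a + X.tr b := by
  simp [tr, Finset.sum_add_distrib]

theorem tr_smul (e : k) (a : X.carrier) : X.tr (e • a) = e • X.tr a := by
  simp [tr, Finset.smul_sum]

theorem tr_mem_inv (a : X.carrier) : X.tr a ∈ X.inv := by
  intro g
  rw [tr, map_sum]
  exact Fintype.sum_equiv (Equiv.mulLeft g) _ _ fun g' => by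
    rw [← AlgEquiv.mul_apply, ← map_mul, Equiv.coe_mulLeft]

theorem tr_grading {d : ℕ} {a : X.carrier} (ha : a ∈ X.grading d) :
    X.tr a ∈ X.grading d :=
  Submodule.sum_mem _ fun g _ => X.degPres g d a ha

theorem tr_mul_inv (a : X.carrier) {b : X.carrier} (hb : b ∈ X.inv) :
    X.tr (a * b) = X.tr a * b := by
  rw [tr, tr, Finset.sum_mul]
  exact Finset.sum_congr rfl fun g _ => by rw [map_mul, hb g]

theorem tr_of_inv {a : X.carrier} (ha : a ∈ X.inv) :
    X.tr a = (Fintype.card G : X.carrier) * a := by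
  rw [tr]
  have h : ∑ g : G, X.action g a = ∑ _g : G, a := Finset.sum_congr rfl fun g _ => ha g
  rw [h, Finset.sum_const, Finset.card_univ, nsmul_eq_mul]

/-- The bijection `H × G/H ≃ G`, `(h, j) ↦ h * (out j)⁻¹`. -/
noncomputable def cosetEquiv (H : Subgroup G) : ↥H × (G ⧸ H) ≃ G where
  toFun p := (p.1 : G) * (p.2.out)⁻¹
  invFun g := (⟨g * (QuotientGroup.mk g⁻¹ : G ⧸ H).out, by
      have h := QuotientGroup.eq.mp (QuotientGroup.out_eq' (QuotientGroup.mk (g⁻¹ : G) : G ⧸ H)).symm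
      simpa using h⟩, QuotientGroup.mk g⁻¹)
  left_inv := by
    rintro ⟨h, j⟩
    have hj : (QuotientGroup.mk ((h : G) * j.out⁻¹)⁻¹ : G ⧸ H) = j := by
      rw [mul_inv_rev, inv_inv, QuotientGroup.mk_mul_of_mem _ (inv_mem h.2),
        QuotientGroup.out_eq']
    refine Prod.ext (Subtype.ext ?_) hj
    simp only [hj]
    group
  right_inv := fun g => by simp

theorem sum_action_cosetEquiv (H : Subgroup G) [Fintype (↥H × (G ⧸ H))] (a : X.carrier) :
    ∑ p : ↥H × (G ⧸ H), X.action ((p.1 : G) * (p.2.out)⁻¹) a = X.tr a :=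
  Fintype.sum_equiv (cosetEquiv H) _ _ fun p => rfl

end GradedAlgebraWithAction

namespace GradedAlgebraWithAction

variable {k G : Type} [CommRing k] [Group G] (X : GradedAlgebraWithAction k G)

/-- The set of homogeneous `G`-invariants of positive degree at most `N`. -/
def posInv (N : ℕ) : Set X.carrier :=
  {a : X.carrier | a ∈ X.inv ∧ ∃ e, 0 < e ∧ e ≤ N ∧ a ∈ X.grading e}

/-- Key identity: a product of `[G : H]` many positive-degree homogeneous `H`-invariants of
degree at most `b` lies in the ideal generated by homogeneous `G`-invariants of positive
degree at most `[G : H] * b`. -/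
theorem prod_mem_span [Fintype G] (H : Subgroup G) [Fintype (G ⧸ H)] {b : ℕ}
    (hu : IsUnit ((Nat.card G : k)))
    (c : G ⧸ H → X.carrier) (d : G ⧸ H → ℕ)
    (hc : ∀ q, c q ∈ X.invSub H) (hg : ∀ q, c q ∈ X.grading (d q))
    (hpos : ∀ q, 0 < d q) (hb : ∀ q, d q ≤ b) :
    (∏ q : G ⧸ H, c q) ∈ Ideal.span (X.posInv (H.index * b)) := by
  classical
  letI : Fintype ↥H := Fintype.ofFinite _
  set J := Ideal.span (X.posInv (H.index * b)) with hJ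
  -- the homogeneous pieces
  set D : (G ⧸ H) → X.carrier := fun q => X.action q.out (c q) with hD
  -- the vanishing sum
  have key : (0 : X.carrier) = ∑ p : ↥H × (G ⧸ H), ∏ q : G ⧸ H,
      (-(X.action ((p.1 : G) * (p.2.out)⁻¹) (D q)) + c q) := by
    rw [eq_comm, Finset.sum_eq_zero]
    intro p _
    apply Finset.prod_eq_zero (Finset.mem_univ p.2)
    rw [hD, ← AlgEquiv.mul_apply, ← map_mul, inv_mul_cancel_right,
      hc p.2 p.1 p.1.2, neg_add_cancel]
  have expand : ∀ p : ↥H × (G ⧸ H), (∏ q : G ⧸ H,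
        (-(X.action ((p.1 : G) * (p.2.out)⁻¹) (D q)) + c q))
      = ∑ t ∈ (Finset.univ : Finset (G ⧸ H)).powerset,
          ((-1) ^ t.card *
            X.action ((p.1 : G) * (p.2.out)⁻¹) (∏ q ∈ t, D q) * ∏ q ∈ Finset.univ \ t, c q) := by
    intro p
    rw [Finset.prod_add]
    refine Finset.sum_congr rfl fun t _ => ?_
    have h1 : ∏ q ∈ t, (-(X.action ((p.1 : G) * (p.2.out)⁻¹) (D q)))
        = (-1) ^ t.card * X.action ((p.1 : G) * (p.2.out)⁻¹) (∏ q ∈ t, D q) := by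
      calc ∏ q ∈ t, (-(X.action ((p.1 : G) * (p.2.out)⁻¹) (D q)))
          = ∏ q ∈ t, ((-1) * X.action ((p.1 : G) * (p.2.out)⁻¹) (D q)) :=
            Finset.prod_congr rfl fun q _ => (neg_one_mul _).symm
        _ = (-1) ^ t.card * ∏ q ∈ t, X.action ((p.1 : G) * (p.2.out)⁻¹) (D q) := by
            rw [Finset.prod_mul_distrib, Finset.prod_const]
        _ = (-1) ^ t.card * X.action ((p.1 : G) * (p.2.out)⁻¹) (∏ q ∈ t, D q) := by
            rw [map_prod]
    rw [h1]
  have key2 : (0 : X.carrier) = ∑ t ∈ (Finset.univ : Finset (G ⧸ H)).powerset,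
      ((-1) ^ t.card * X.tr (∏ q ∈ t, D q) * ∏ q ∈ Finset.univ \ t, c q) := by
    rw [key]
    have := fun p : ↥H × (G ⧸ H) => expand p
    rw [Finset.sum_congr rfl fun p _ => expand p, Finset.sum_comm]
    refine Finset.sum_congr rfl fun t _ => ?_
    rw [← X.sum_action_cosetEquiv H (∏ q ∈ t, D q), Finset.mul_sum, Finset.sum_mul]
  -- separate the empty subset
  have hmem : (∅ : Finset (G ⧸ H)) ∈ (Finset.univ : Finset (G ⧸ H)).powerset := by
    simp
  rw [← Finset.sum_erase_add _ _ hmem] at key2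
  have hempty : ((-1) ^ (∅ : Finset (G ⧸ H)).card *
      X.tr (∏ q ∈ (∅ : Finset (G ⧸ H)), D q) * ∏ q ∈ Finset.univ \ (∅ : Finset (G ⧸ H)), c q)
      = (Nat.card G : X.carrier) * ∏ q : G ⧸ H, c q := by
    rw [Finset.card_empty, Finset.prod_empty, pow_zero, one_mul, Finset.sdiff_empty]
    have h1 : X.tr 1 = (Nat.card G : X.carrier) := by
      rw [X.tr_of_inv (Subring.one_mem X.inv), mul_one, Nat.card_eq_fintype_card]
    rw [h1]
  rw [hempty] at key2
  -- so (card G) * prod ∈ J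
  have hcard : (Nat.card G : X.carrier) * ∏ q : G ⧸ H, c q ∈ J := by
    have h2 : (Nat.card G : X.carrier) * ∏ q : G ⧸ H, c q
        = -∑ t ∈ ((Finset.univ : Finset (G ⧸ H)).powerset.erase ∅),
            ((-1) ^ t.card * X.tr (∏ q ∈ t, D q) * ∏ q ∈ Finset.univ \ t, c q) := by
      rw [eq_neg_iff_add_eq_zero, add_comm, ← key2]
    rw [h2]
    refine neg_mem (Ideal.sum_mem _ fun t ht => ?_)
    have htne : t.Nonempty := by
      rcases Finset.eq_empty_or_nonempty t with rfl | h
      · exact absurd (Finset.mem_erase.mp ht).1 (by simp)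
      · exact h
    have hptr : X.tr (∏ q ∈ t, D q) ∈ X.posInv (H.index * b) := by
      refine ⟨X.tr_mem_inv _, ∑ q ∈ t, d q, ?_, ?_, ?_⟩
      · exact Finset.sum_pos (fun q _ => hpos q) htne
      · calc ∑ q ∈ t, d q ≤ ∑ _q ∈ t, b := Finset.sum_le_sum fun q _ => hb q
          _ = t.card * b := by rw [Finset.sum_const, smul_eq_mul]
          _ ≤ H.index * b := by
              refine Nat.mul_le_mul_right _ ?_
              rw [Subgroup.index_eq_card, Nat.card_eq_fintype_card]
              exact (Finset.card_le_univ t).trans (le_of_eq (Finset.card_univ))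
      · exact X.tr_grading (SetLike.prod_mem_graded X.grading d _
          (fun q _ => X.degPres _ _ _ (hg q)))
    have : X.tr (∏ q ∈ t, D q) ∈ J := hJ ▸ Ideal.subset_span hptr
    rw [mul_comm ((-1 : X.carrier) ^ t.card) _, mul_assoc]
    exact Ideal.mul_mem_right _ _ this
  -- divide by the unit
  have hfinal : (∏ q : G ⧸ H, c q)
      = algebraMap k X.carrier (↑hu.unit⁻¹) * ((Nat.card G : X.carrier) * ∏ q : G ⧸ H, c q) := by
    rw [← mul_assoc]
    have : (Nat.card G : X.carrier) = algebraMap k X.carrier ((Nat.card G : k)) := by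
      rw [map_natCast]
    rw [this, ← map_mul, IsUnit.val_inv_mul hu]
    rw [map_one, one_mul]
  rw [hfinal]
  exact Ideal.mul_mem_left _ _ hcard

end GradedAlgebraWithAction

namespace GradedAlgebraWithAction

variable {k G : Type} [CommRing k] [Group G] (X : GradedAlgebraWithAction k G)
variable (H : Subgroup G) (b : ℕ)

/-- The generating set of `A^H`: homogeneous `H`-invariants of degree at most `b`. -/
def genSet : Set X.carrier := {a : X.carrier | a ∈ X.invSub H ∧ ∃ d ≤ b, a ∈ X.grading d}

/-- A valid entry: a homogeneous `H`-invariant of recorded degree at most `b`. -/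
def Ok (p : X.carrier × ℕ) : Prop :=
  p.1 ∈ X.invSub H ∧ p.1 ∈ X.grading p.2 ∧ p.2 ≤ b

/-- Products of valid entries. -/
def prodSetAll : Set X.carrier :=
  {x : X.carrier | ∃ l : Multiset (X.carrier × ℕ), (∀ p ∈ l, X.Ok H b p) ∧
    x = (l.map Prod.fst).prod}

/-- Products of valid entries of total degree `e`. -/
def prodSet (e : ℕ) : Set X.carrier :=
  {x : X.carrier | ∃ l : Multiset (X.carrier × ℕ), (∀ p ∈ l, X.Ok H b p) ∧
    (l.map Prod.snd).sum = e ∧ x = (l.map Prod.fst).prod}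

theorem prod_grading_of_ok {l : Multiset (X.carrier × ℕ)} (hl : ∀ p ∈ l, X.Ok H b p) :
    (l.map Prod.fst).prod ∈ X.grading ((l.map Prod.snd).sum) := by
  induction l using Multiset.induction_on with
  | empty => simpa using SetLike.one_mem_graded X.grading
  | cons p l ih =>
      rw [Multiset.map_cons, Multiset.map_cons, Multiset.prod_cons, Multiset.sum_cons]
      exact SetLike.mul_mem_graded (hl p (Multiset.mem_cons_self p l)).2.1
        (ih fun q hq => hl q (Multiset.mem_cons_of_mem hq))

theorem mul_mem_addClosure_prodSetAll {x y : X.carrier}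
    (hx : x ∈ AddSubgroup.closure (X.prodSetAll H b))
    (hy : y ∈ AddSubgroup.closure (X.prodSetAll H b)) :
    x * y ∈ AddSubgroup.closure (X.prodSetAll H b) := by
  induction hx using AddSubgroup.closure_induction with
  | mem x hx =>
      induction hy using AddSubgroup.closure_induction with
      | mem y hy =>
          obtain ⟨l1, hl1, rfl⟩ := hx
          obtain ⟨l2, hl2, rfl⟩ := hy
          refine AddSubgroup.subset_closure ⟨l1 + l2, ?_, ?_⟩
          · intro p hp
            rcases Multiset.mem_add.mp hp with h | h
            · exact hl1 p h
            · exact hl2 p h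
          · rw [Multiset.map_add, Multiset.prod_add]
      | zero => rw [mul_zero]; exact zero_mem _
      | add a c _ _ ha hc => rw [mul_add]; exact add_mem ha hc
      | neg a _ ha => rw [mul_neg]; exact neg_mem ha
  | zero => rw [zero_mul]; exact zero_mem _
  | add a c _ _ ha hc => rw [add_mul]; exact add_mem ha hc
  | neg a _ ha => rw [neg_mul]; exact neg_mem ha

theorem closure_genSet_le {x : X.carrier} (hx : x ∈ Subring.closure (X.genSet H b)) :
    x ∈ AddSubgroup.closure (X.prodSetAll H b) := by
  induction hx using Subring.closure_induction with
  | mem a ha =>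
      obtain ⟨h1, d, hd, h2⟩ := ha
      exact AddSubgroup.subset_closure ⟨{(a, d)}, by
        intro p hp
        rw [Multiset.mem_singleton] at hp
        subst hp
        exact ⟨h1, h2, hd⟩, by simp⟩
  | zero => exact zero_mem _
  | one => exact AddSubgroup.subset_closure ⟨0, by simp, by simp⟩
  | add a c _ _ ha hc => exact add_mem ha hc
  | neg a _ ha => exact neg_mem ha
  | mul a c _ _ ha hc => exact X.mul_mem_addClosure_prodSetAll H b ha hc

theorem proj_mem_addClosure_prodSet (D : ℕ) {x : X.carrier}
    (hx : x ∈ AddSubgroup.closure (X.prodSetAll H b)) :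
    X.proj D x ∈ AddSubgroup.closure (X.prodSet H b D) := by
  induction hx using AddSubgroup.closure_induction with
  | mem a ha =>
      obtain ⟨l, hl, rfl⟩ := ha
      rcases eq_or_ne ((l.map Prod.snd).sum) D with rfl | hne
      · rw [X.proj_of_mem_same (X.prod_grading_of_ok H b hl)]
        exact AddSubgroup.subset_closure ⟨l, hl, rfl, rfl⟩
      · rw [X.proj_of_mem_ne (X.prod_grading_of_ok H b hl) hne]
        exact zero_mem _
  | zero => rw [X.proj_zero]; exact zero_mem _
  | add a c _ _ ha hc => rw [X.proj_add]; exact add_mem ha hc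
  | neg a _ ha => rw [X.proj_neg]; exact neg_mem ha

end GradedAlgebraWithAction

namespace GradedAlgebraWithAction

variable {k G : Type} [CommRing k] [Group G] (X : GradedAlgebraWithAction k G)
variable (H : Subgroup G) (b : ℕ)

theorem prodSet_subset_span [Fintype G] [Fintype (G ⧸ H)] {D : ℕ}
    (hu : IsUnit ((Nat.card G : k))) (hD : H.index * b < D) {x : X.carrier}
    (hx : x ∈ X.prodSet H b D) :
    x ∈ Ideal.span (X.posInv (H.index * b)) := by
  classical
  obtain ⟨l, hl, hsum, rfl⟩ := hx
  set l1 := l.filter (fun p => 0 < p.2) with hl1def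
  have hsplit : l.filter (fun p => 0 < p.2) + l.filter (fun p => ¬ 0 < p.2) = l :=
    Multiset.filter_add_not _ l
  have hsum0 : ((l.filter (fun p => ¬ 0 < p.2)).map Prod.snd).sum = 0 := by
    rw [Multiset.sum_eq_zero]
    intro y hy
    obtain ⟨p, hp, rfl⟩ := Multiset.mem_map.mp hy
    have := (Multiset.mem_filter.mp hp).2
    omega
  have hsum1 : (l1.map Prod.snd).sum = D := by
    have h := congrArg (fun m : Multiset (X.carrier × ℕ) => ((m.map Prod.snd)).sum) hsplit
    simp only [Multiset.map_add, Multiset.sum_add, hsum0, add_zero] at h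
    rw [hl1def, h, hsum]
  have hcard : D ≤ Multiset.card l1 * b := by
    have h := Multiset.sum_le_card_nsmul (l1.map Prod.snd) b ?_
    · rwa [Multiset.card_map, smul_eq_mul, hsum1] at h
    · intro y hy
      obtain ⟨p, hp, rfl⟩ := Multiset.mem_map.mp hy
      exact (hl p (Multiset.mem_of_le (Multiset.filter_le _ l) hp)).2.2
  have hm : H.index < Multiset.card l1 :=
    Nat.lt_of_mul_lt_mul_right (lt_of_lt_of_le hD hcard)
  -- extract H.index entries of positive degree
  set K : List (X.carrier × ℕ) := l1.toList.take H.index with hKdef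
  have hKsub : (K : Multiset (X.carrier × ℕ)) ≤ l1 := by
    have h1 : (K : Multiset (X.carrier × ℕ)) ≤ (l1.toList : Multiset (X.carrier × ℕ)) :=
      Multiset.coe_le.mpr (List.take_sublist _ _).subperm
    rwa [Multiset.coe_toList] at h1
  have hKle : (K : Multiset (X.carrier × ℕ)) ≤ l := hKsub.trans (Multiset.filter_le _ l)
  have hlen : K.length = H.index := by
    rw [hKdef, List.length_take, Multiset.length_toList]
    omega
  have hKmem : ∀ p ∈ K, p ∈ l1 := by
    intro p hp
    rw [← Multiset.mem_toList]
    exact (List.take_sublist _ _).subset hp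
  -- set up the function on cosets
  have hcards : Fintype.card (G ⧸ H) = K.length := by
    rw [hlen, Subgroup.index_eq_card, Nat.card_eq_fintype_card]
  let e : G ⧸ H ≃ Fin K.length := Fintype.equivFinOfCardEq hcards
  have hKspan : ((K : Multiset (X.carrier × ℕ)).map Prod.fst).prod
      ∈ Ideal.span (X.posInv (H.index * b)) := by
    have hprodeq : (∏ q : G ⧸ H, (K.get (e q)).1)
        = ((K : Multiset (X.carrier × ℕ)).map Prod.fst).prod := by
      rw [Equiv.prod_comp e (fun i => (K.get i).1)]
      rw [Multiset.map_coe, Multiset.prod_coe]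
      rw [← Fin.prod_univ_fun_getElem K Prod.fst]
      rfl
    rw [← hprodeq]
    refine X.prod_mem_span H hu (fun q => (K.get (e q)).1) (fun q => (K.get (e q)).2)
        ?_ ?_ ?_ ?_
    · intro q
      exact (hl _ (Multiset.mem_of_le hKle (by exact_mod_cast List.get_mem K (e q)))).1
    · intro q
      exact (hl _ (Multiset.mem_of_le hKle (by exact_mod_cast List.get_mem K (e q)))).2.1
    · intro q
      have h2 := hKmem _ (List.get_mem K (e q))
      rw [hl1def] at h2
      exact (Multiset.mem_filter.mp h2).2
    · intro q
      exact (hl _ (Multiset.mem_of_le hKle (by exact_mod_cast List.get_mem K (e q)))).2.2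
  obtain ⟨l3, hl3⟩ := Multiset.le_iff_exists_add.mp hKle
  rw [hl3, Multiset.map_add, Multiset.prod_add]
  exact Ideal.mul_mem_right _ _ hKspan

end GradedAlgebraWithAction

namespace GradedAlgebraWithAction

variable {k G : Type} [CommRing k] [Group G] (X : GradedAlgebraWithAction k G)

theorem proj_sum {ι : Type*} (d : ℕ) (s : Finset ι) (g : ι → X.carrier) :
    X.proj d (∑ i ∈ s, g i) = ∑ i ∈ s, X.proj d (g i) := by
  classical
  induction s using Finset.cons_induction with
  | empty => simp [X.proj_zero]
  | cons i s hi ih => rw [Finset.sum_cons, Finset.sum_cons, X.proj_add, ih]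

theorem tr_sum [Fintype G] {ι : Type*} (s : Finset ι) (g : ι → X.carrier) :
    X.tr (∑ i ∈ s, g i) = ∑ i ∈ s, X.tr (g i) := by
  classical
  induction s using Finset.cons_induction with
  | empty => simp [tr]
  | cons i s hi ih => rw [Finset.sum_cons, Finset.sum_cons, X.tr_add, ih]

/-- The core relative Noether bound argument. -/
theorem core_lemma [Fintype G] (H : Subgroup G) [Fintype (G ⧸ H)] (b : ℕ)
    (hu : IsUnit ((Nat.card G : k)))
    (hgen : X.invSub H ≤ Subring.closure (X.genSet H b)) :
    X.inv ≤ Subring.closure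
      {a : X.carrier | a ∈ X.inv ∧ ∃ d ≤ H.index * b, a ∈ X.grading d} := by
  classical
  set N := H.index * b with hN
  set R := Subring.closure {a : X.carrier | a ∈ X.inv ∧ ∃ d ≤ N, a ∈ X.grading d} with hR
  have main : ∀ D : ℕ, ∀ f : X.carrier, f ∈ X.inv → f ∈ X.grading D → f ∈ R := by
    intro D
    induction D using Nat.strong_induction_on with
    | _ D ih =>
      intro f hfi hfg
      by_cases hDle : D ≤ N
      · exact Subring.subset_closure ⟨hfi, D, hDle, hfg⟩
      push_neg at hDle
      -- f lies in the ideal generated by posInv N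
      have hf2 : f ∈ Ideal.span (X.posInv N) := by
        have h0 : f ∈ Subring.closure (X.genSet H b) := hgen (X.inv_le_invSub H hfi)
        have h1 := X.closure_genSet_le H b h0
        have h2 := X.proj_mem_addClosure_prodSet H b D h1
        rw [X.proj_of_mem_same hfg] at h2
        have hle : AddSubgroup.closure (X.prodSet H b D)
            ≤ (Ideal.span (X.posInv N)).toAddSubgroup :=
          (AddSubgroup.closure_le _).mpr fun x hx =>
            X.prodSet_subset_span H b hu hDle hx
        exact hle h2
      obtain ⟨c, hcsupp, hcsum⟩ := Submodule.mem_span_set.mp hf2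
      have hchoice : ∀ p ∈ X.posInv N, ∃ e, 0 < e ∧ e ≤ N ∧ p ∈ X.grading e :=
        fun p hp => hp.2
      choose! dp hdpos hdle hdgrad using hchoice
      set s := c.support with hs
      have hsupp : ∀ p ∈ s, p ∈ X.posInv N := fun p hp => hcsupp hp
      set z : X.carrier → X.carrier := fun p => X.proj (D - dp p) (c p) with hz
      have h3 : f = ∑ p ∈ s, z p * p := by
        have hsum' : f = ∑ p ∈ s, c p * p := by
          rw [← hcsum]
          exact Finset.sum_congr rfl fun p _ => (smul_eq_mul _ _).symm
        calc f = X.proj D f := (X.proj_of_mem_same hfg).symm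
          _ = X.proj D (∑ p ∈ s, c p * p) := by rw [← hsum']
          _ = ∑ p ∈ s, X.proj D (c p * p) := X.proj_sum D s _
          _ = ∑ p ∈ s, z p * p := Finset.sum_congr rfl fun p hp =>
              X.proj_mul_right (hdgrad p (hsupp p hp)) D
                (le_of_lt (lt_of_le_of_lt (hdle p (hsupp p hp)) hDle)) (c p)
      have htrf : X.tr f = ((Nat.card G : k)) • f := by
        rw [X.tr_of_inv hfi, Algebra.smul_def, map_natCast, Nat.card_eq_fintype_card]
      have h4 : f = (↑hu.unit⁻¹ : k) • X.tr f := by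
        rw [htrf, smul_smul, IsUnit.val_inv_mul, one_smul]
      have h5 : f = ∑ p ∈ s, ((↑hu.unit⁻¹ : k) • X.tr (z p)) * p := by
        rw [h4]
        have : X.tr f = ∑ p ∈ s, X.tr (z p) * p := by
          rw [h3] -- ?
          rw [X.tr_sum]
          exact Finset.sum_congr rfl fun p hp => X.tr_mul_inv (z p) (hsupp p hp).1
        rw [this, Finset.smul_sum]
        exact Finset.sum_congr rfl fun p _ => (smul_mul_assoc _ _ _).symm
      rw [h5]
      refine Subring.sum_mem R fun p hp => Subring.mul_mem R ?_ ?_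
      · -- by induction on degree
        have hwinv : (↑hu.unit⁻¹ : k) • X.tr (z p) ∈ X.inv :=
          X.inv_smul_mem (X.tr_mem_inv _)
        have hwgrad : (↑hu.unit⁻¹ : k) • X.tr (z p) ∈ X.grading (D - dp p) :=
          Submodule.smul_mem _ _ (X.tr_grading (X.proj_mem _ _))
        exact ih (D - dp p)
          (Nat.sub_lt (lt_of_le_of_lt (Nat.zero_le N) hDle) (hdpos p (hsupp p hp)))
          _ hwinv hwgrad
      · exact Subring.subset_closure
          ⟨(hsupp p hp).1, dp p, hdle p (hsupp p hp), hdgrad p (hsupp p hp)⟩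
  intro f hf
  obtain ⟨sf, hsf⟩ := X.exists_sum_proj f
  rw [hsf]
  refine Subring.sum_mem _ fun d _ => main d _ ?_ (X.proj_mem d f)
  intro g
  rw [← X.proj_action, hf g]

end GradedAlgebraWithAction

theorem beta_le {A : Type*} [CommRing A] {𝒜 : ℕ → Set A} {B : Subring A} {n : ℕ}
    (h : B ≤ Subring.closure {a : A | a ∈ B ∧ ∃ d ≤ n, a ∈ 𝒜 d}) : beta 𝒜 B ≤ (n : ℕ∞) :=
  sInf_le ⟨n, h, rfl⟩

theorem of_beta_le {A : Type*} [CommRing A] {𝒜 : ℕ → Set A} {B : Subring A} {n : ℕ}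
    (h : beta 𝒜 B ≤ (n : ℕ∞)) :
    B ≤ Subring.closure {a : A | a ∈ B ∧ ∃ d ≤ n, a ∈ 𝒜 d} := by
  by_contra hc
  have hbig : ((n + 1 : ℕ) : ℕ∞) ≤ beta 𝒜 B := by
    refine le_sInf ?_
    rintro x ⟨t, ht, rfl⟩
    rcases le_or_gt t n with hle | hlt
    · exfalso
      refine hc (ht.trans (Subring.closure_mono ?_))
      rintro a ⟨ha, d, hd, hg⟩
      exact ⟨ha, d, hd.trans hle, hg⟩
    · exact_mod_cast hlt
  have := hbig.trans h
  rw [Nat.cast_le] at this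
  omega

namespace GradedAlgebraWithAction

variable {k G : Type} [CommRing k] [Group G] (X : GradedAlgebraWithAction k G)

/-- Restriction of the action to a subgroup. -/
noncomputable def restrict (H : Subgroup G) : GradedAlgebraWithAction k ↥H where
  carrier := X.carrier
  commRing := X.commRing
  algebra := X.algebra
  grading := X.grading
  graded := X.graded
  action := X.action.comp H.subtype
  degPres := fun g d a ha => X.degPres g d a ha

theorem restrict_inv (H : Subgroup G) : (X.restrict H).inv = X.invSub H := by
  ext a
  constructor
  · intro h g hg
    exact h ⟨g, hg⟩
  · intro h g
    exact h g g.2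

theorem restrict_betaTop (H : Subgroup G) : (X.restrict H).betaTop = X.betaTop := rfl

theorem restrict_betaInv (H : Subgroup G) :
    (X.restrict H).betaInv = beta (fun d => (X.grading d : Set X.carrier)) (X.invSub H) := by
  rw [betaInv, restrict_inv]
  rfl

end GradedAlgebraWithAction

theorem le_betaRing {k G : Type} [CommRing k] [Group G] (X : GradedAlgebraWithAction k G)
    (h : X.betaTop ≤ 1) : X.betaInv ≤ betaRing k G :=
  le_iSup₂ (f := fun (X : GradedAlgebraWithAction k G) (_ : X.betaTop ≤ 1) => X.betaInv) X h

theorem betaRing_le_part1 (k G : Type) [CommRing k] [Group G] [Finite G]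
    (hunit : IsUnit ((Nat.card G : k))) (H : Subgroup G) :
    betaRing k G ≤ (H.index : ℕ∞) * betaRing k ↥H := by
  refine iSup₂_le fun X hX => ?_
  rcases eq_or_ne (betaRing k ↥H) ⊤ with htop | hne
  · rw [htop, ENat.mul_top]
    · exact le_top
    · exact_mod_cast Subgroup.index_ne_zero_of_finite (H := H)
  obtain ⟨b, hb0⟩ := WithTop.ne_top_iff_exists.mp hne
  have hb : ((b : ℕ) : ℕ∞) = betaRing k ↥H := by exact_mod_cast hb0
  letI : Fintype G := Fintype.ofFinite G
  letI : Fintype (G ⧸ H) := Fintype.ofFinite _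
  have h1 : (X.restrict H).betaInv ≤ ((b : ℕ) : ℕ∞) := by
    rw [hb]
    exact le_betaRing _ hX
  rw [X.restrict_betaInv H] at h1
  have hgen : X.invSub H ≤ Subring.closure (X.genSet H b) := of_beta_le h1
  have hcore := X.core_lemma H b hunit hgen
  have h2 : X.betaInv ≤ ((H.index * b : ℕ) : ℕ∞) := beta_le hcore
  calc X.betaInv ≤ ((H.index * b : ℕ) : ℕ∞) := h2
    _ = (H.index : ℕ∞) * ((b : ℕ) : ℕ∞) := by rw [Nat.cast_mul]
    _ = (H.index : ℕ∞) * betaRing k ↥H := by rw [hb]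

theorem betaRing_bot_le_one (k G : Type) [CommRing k] [Group G] :
    betaRing k ↥(⊥ : Subgroup G) ≤ 1 := by
  refine iSup₂_le fun X hX => ?_
  have hinv : X.inv = ⊤ := by
    ext a
    simp only [Subring.mem_top, iff_true]
    intro g
    rw [Subsingleton.elim g 1, map_one, AlgEquiv.one_apply]
  have : X.betaInv = X.betaTop := by
    rw [GradedAlgebraWithAction.betaInv, hinv]
    rfl
  rw [this]
  exact hX

/-- relative Noether bound. Let `k` be a commutative ring and `G` a
finite group with `|G|` a unit of `k`.  Then for any subgroup `H ⊆ G` one has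
`β_k(G) ≤ [G:H] ⬝ β_k(H)`; in particular `β_k(G) ≤ |G|`. -/
theorem betaRing_le_index_mul_betaRing (k G : Type) [CommRing k] [Group G] [Finite G]
    (hunit : IsUnit ((Nat.card G : k))) (H : Subgroup G) :
    betaRing k G ≤ (H.index : ℕ∞) * betaRing k H ∧
      betaRing k G ≤ (Nat.card G : ℕ∞) := by
  constructor
  · exact betaRing_le_part1 k G hunit H
  · calc betaRing k G
        ≤ ((⊥ : Subgroup G).index : ℕ∞) * betaRing k ↥(⊥ : Subgroup G) :=
          betaRing_le_part1 k G hunit ⊥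
      _ ≤ ((⊥ : Subgroup G).index : ℕ∞) * 1 := by gcongr; exact betaRing_bot_le_one k G
      _ = (Nat.card G : ℕ∞) := by rw [mul_one, Subgroup.index_bot]
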